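/- Let G be a locally finite simple C4-free graph, let x be a vertex contained in a triangle with deg(x) ≥ 3. Then the punctured 2-ball of x (the induced structure on vertices at distance 1 or 2 from x, with spherical edges within S1(x) and radial edges between S1(x) and S2(x)) is disconnected. -/

import Mathlib

open Finset

variable {V : Type*}

/-- Unweighted non-normalized graph Laplacian. -/
noncomputable def nnLap (G : SimpleGraph V) [G.LocallyFinite] (f : V → ℝ) (x : V) : ℝ :=
  ∑ y ∈ G.neighborFinset x, (f y - f x)

/-- Unweighted normalized graph Laplacian. -/
noncomputable def nLap (G : SimpleGraph V) [G.LocallyFinite] (f : V → ℝ) (x : V) : ℝ :=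
  (∑ y ∈ G.neighborFinset x, (f y - f x)) / (G.degree x : ℝ)

/-- Bakry–Émery carré du champ operator Γ for a Laplacian `L`. -/
noncomputable def gam (L : (V → ℝ) → V → ℝ) (f g : V → ℝ) (x : V) : ℝ :=
  (L (f * g) x - f x * L g x - g x * L f x) / 2

/-- Iterated carré du champ operator Γ₂ for a Laplacian `L`. -/
noncomputable def gam2 (L : (V → ℝ) → V → ℝ) (f g : V → ℝ) (x : V) : ℝ :=
  (L (gam L f g) x - gam L f (L g) x - gam L (L f) g x) / 2

/-- `G` has no 4-cycle subgraph, equivalently any two distinct vertices have at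
most one common neighbor. -/
def C4Free (G : SimpleGraph V) : Prop :=
  ∀ ⦃u v a b : V⦄, u ≠ v → G.Adj u a → G.Adj a v → G.Adj u b → G.Adj b v → a = b

/-- The punctured 2-ball of `x`: the graph on `S₁(x) ∪ S₂(x)` with the spherical
edges inside `S₁(x)` and the radial edges between `S₁(x)` and `S₂(x)`. -/
def pBall (G : SimpleGraph V) (x : V) : SimpleGraph V where
  Adj u v := G.Adj u v ∧ ((G.dist x u = 1 ∧ G.dist x v = 1) ∨
    (G.dist x u = 1 ∧ G.dist x v = 2) ∨ (G.dist x u = 2 ∧ G.dist x v = 1))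
  symm := by
    constructor
    intro u v h
    refine ⟨h.1.symm, ?_⟩
    tauto
  loopless := ⟨fun u h => G.loopless.irrefl u h.1⟩

/-- If a vertex `x` of a locally finite `C₄`-free graph lies in a triangle and
`deg x ≥ 3`, then the punctured 2-ball of `x` is disconnected. -/
theorem stmt_2 (G : SimpleGraph V) [G.LocallyFinite] (hC4 : C4Free G)
    (x x1 x2 : V) (h1 : G.Adj x x1) (h2 : G.Adj x x2) (h12 : G.Adj x1 x2)
    (hd : 3 ≤ G.degree x) :
    ∃ u v : V, (G.dist x u = 1 ∨ G.dist x u = 2) ∧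
      (G.dist x v = 1 ∨ G.dist x v = 2) ∧ ¬ (pBall G x).Reachable u v := by
  classical
  -- find a third neighbor y of x
  obtain ⟨y, hy⟩ : ((G.neighborFinset x) \ {x1, x2}).Nonempty := by
    rw [← Finset.card_pos]
    have h2' : ({x1, x2} : Finset V).card ≤ 2 :=
      (Finset.card_insert_le _ _).trans (by simp)
    have := Finset.le_card_sdiff ({x1, x2} : Finset V) (G.neighborFinset x)
    have hdeg : (G.neighborFinset x).card = G.degree x := rfl
    omega
  rw [Finset.mem_sdiff, Finset.mem_insert, Finset.mem_singleton, SimpleGraph.mem_neighborFinset]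
    at hy
  obtain ⟨hxy, hy12⟩ := hy
  have hy1 : y ≠ x1 := fun h => hy12 (Or.inl h)
  have hy2 : y ≠ x2 := fun h => hy12 (Or.inr h)
  -- the invariant
  set P : V → Prop := fun v => v = x1 ∨ v = x2 ∨
    (G.dist x v = 2 ∧ (G.Adj x1 v ∨ G.Adj x2 v)) with hP
  have hpres : ∀ u v : V, P u → (pBall G x).Adj u v → P v := by
    intro u v hu ⟨hG, hcs⟩
    rcases hu with rfl | rfl | ⟨hd2, hadj⟩
    · -- u = x1
      rcases hcs with ⟨_, hv1⟩ | ⟨_, hv2⟩ | ⟨hu2, _⟩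
      · by_cases hvx2 : v = x2
        · exact Or.inr (Or.inl hvx2)
        · exfalso
          have hvx : G.Adj v x := (SimpleGraph.dist_eq_one_iff_adj.mp hv1).symm
          exact h1.ne (hC4 hvx2 hvx h2 hG.symm h12)
      · exact Or.inr (Or.inr ⟨hv2, Or.inl hG⟩)
      · rw [SimpleGraph.dist_eq_one_iff_adj.mpr h1] at hu2; omega
    · -- u = x2
      rcases hcs with ⟨_, hv1⟩ | ⟨_, hv2⟩ | ⟨hu2, _⟩
      · by_cases hvx1 : v = x1
        · exact Or.inl hvx1
        · exfalso
          have hvx : G.Adj v x := (SimpleGraph.dist_eq_one_iff_adj.mp hv1).symm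
          exact h2.ne (hC4 hvx1 hvx h1 hG.symm h12.symm)
      · exact Or.inr (Or.inr ⟨hv2, Or.inr hG⟩)
      · rw [SimpleGraph.dist_eq_one_iff_adj.mpr h2] at hu2; omega
    · -- u ∈ S₂ adjacent to x1 or x2
      have hune : u ≠ x := by
        intro h; rw [h, SimpleGraph.dist_self] at hd2; omega
      rcases hcs with ⟨hu1, _⟩ | ⟨hu1, _⟩ | ⟨_, hv1⟩
      · omega
      · omega
      · have hxv : G.Adj x v := SimpleGraph.dist_eq_one_iff_adj.mp hv1
        rcases hadj with h1u | h2u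
        · refine Or.inl ?_
          by_contra hvx1
          exact hune (hC4 (Ne.symm hvx1) h1u hG h1.symm hxv)
        · refine Or.inr (Or.inl ?_)
          by_contra hvx2
          exact hune (hC4 (Ne.symm hvx2) h2u hG h2.symm hxv)
  refine ⟨x1, y, Or.inl (SimpleGraph.dist_eq_one_iff_adj.mpr h1),
    Or.inl (SimpleGraph.dist_eq_one_iff_adj.mpr hxy), fun hr => ?_⟩
  obtain ⟨w⟩ := hr
  have hw : ∀ {a b : V}, (pBall G x).Walk a b → P a → P b := by
    intro a b w
    induction w with
    | nil => exact id
    | cons h p ih => exact fun ha => ih (hpres _ _ ha h)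
  have hPy : P y := hw w (Or.inl rfl)
  rcases hPy with h | h | ⟨hd, _⟩
  · exact hy1 h
  · exact hy2 h
  · rw [SimpleGraph.dist_eq_one_iff_adj.mpr hxy] at hd; omega
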